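/- Let C be a binary cyclic code of length n with generator polynomial g ∈ F_2[X] of degree r having no repeated roots, where g = g_1 ⋯ g_e with g_i distinct irreducible of degrees d_1, ..., d_e and α_i a root of g_i. For f ∈ F_2[X], let LC(f) = { (α_1^i f(α_1), ..., α_e^i f(α_e)) : 0 ≤ i ≤ n-1 }. Then for f_1, f_2 ∈ F_2[X], LC(f_1) = LC(f_2) if and only if f_1(X) ≡ X^k f_2(X) (mod g(X)) for some k ≥ 0. -/

import Mathlib

open Polynomial

/-- For a binary cyclic code with squarefree generator polynomial
`G = g_1 ⋯ g_e` (distinct irreducibles with roots `α_i`), the sets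
`LC(f) = {(α_1^i f(α_1), ..., α_e^i f(α_e)) : 0 ≤ i < n}` satisfy
`LC(f₁) = LC(f₂)` iff `f₁ ≡ X^k f₂ (mod G)` for some `k ≥ 0`. -/
theorem stmt12 (n e : ℕ) (hn : 0 < n) (he : 0 < e)
    (F : Type*) [Field F] [Algebra (ZMod 2) F]
    (g : Fin e → Polynomial (ZMod 2))
    (hirr : ∀ i, Irreducible (g i)) (hinj : Function.Injective g)
    (G : Polynomial (ZMod 2)) (hG : G = ∏ i : Fin e, g i)
    (hdvd : G ∣ X ^ n - 1)
    (α : Fin e → F) (hroot : ∀ i, Polynomial.aeval (α i) (g i) = 0)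
    (LC : Polynomial (ZMod 2) → Set (Fin e → F))
    (hLC : ∀ f, LC f = {v : Fin e → F | ∃ i : ℕ, i < n ∧
      v = fun j => α j ^ i * Polynomial.aeval (α j) f}) :
    ∀ f₁ f₂ : Polynomial (ZMod 2),
      LC f₁ = LC f₂ ↔ ∃ k : ℕ, G ∣ f₁ - X ^ k * f₂ := by
  have hmon : ∀ i, (g i).Monic := by
    intro i
    have h0 : (g i).leadingCoeff ≠ 0 := leadingCoeff_ne_zero.mpr (hirr i).ne_zero
    have h1 : ∀ x : ZMod 2, x ≠ 0 → x = 1 := by decide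
    exact h1 _ h0
  have hmin : ∀ i, minpoly (ZMod 2) (α i) = g i := fun i =>
    (minpoly.eq_of_irreducible_of_monic (hirr i) (hroot i) (hmon i)).symm
  have hdvd_iff : ∀ i (h : Polynomial (ZMod 2)), aeval (α i) h = 0 → g i ∣ h := by
    intro i h hh
    rw [← hmin i]; exact minpoly.dvd _ _ hh
  have hGdvd : ∀ h, (∀ i, aeval (α i) h = 0) → G ∣ h := by
    intro h hh
    rw [hG]
    apply Finset.prod_dvd_of_coprime
    · intro i _ j _ hij
      rw [Function.onFun, (hirr i).coprime_iff_not_dvd]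
      intro hd
      exact hij (hinj (Polynomial.eq_of_monic_of_associated (hmon i) (hmon j)
        ((hirr i).associated_of_dvd (hirr j) hd)))
    · intro i _; exact hdvd_iff i h (hh i)
  have hGaev : ∀ i h, G ∣ h → aeval (α i) h = 0 := by
    intro i h hd
    have hgi : g i ∣ G := by rw [hG]; exact Finset.dvd_prod_of_mem g (Finset.mem_univ i)
    obtain ⟨q, hq⟩ := dvd_trans hgi hd
    rw [hq, map_mul, hroot, zero_mul]
  have hαn : ∀ i, α i ^ n = 1 := by
    intro i
    have := hGaev i _ hdvd
    rw [map_sub, map_pow, aeval_X, map_one, sub_eq_zero] at this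
    exact this
  have hpowmod : ∀ i a, α i ^ (a % n) = α i ^ a := by
    intro i a
    conv_rhs => rw [← Nat.mod_add_div a n]
    rw [pow_add, pow_mul, hαn, one_pow, mul_one]
  intro f₁ f₂
  constructor
  · intro heq
    have h1 : (fun j => Polynomial.aeval (α j) f₁) ∈ LC f₁ := by
      rw [hLC]; exact ⟨0, hn, by funext j; simp⟩
    rw [heq, hLC] at h1
    obtain ⟨k, hk, hv⟩ := h1
    refine ⟨k, hGdvd _ fun i => ?_⟩
    have hvi := congrFun hv i
    rw [map_sub, map_mul, map_pow, aeval_X, ← hvi, sub_self]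
  · rintro ⟨k, hk⟩
    have key : ∀ j, aeval (α j) f₁ = α j ^ k * aeval (α j) f₂ := by
      intro j
      have := hGaev j _ hk
      rw [map_sub, map_mul, map_pow, aeval_X, sub_eq_zero] at this
      exact this
    rw [hLC, hLC]
    ext v
    simp only [Set.mem_setOf_eq]
    constructor
    · rintro ⟨i, hi, rfl⟩
      refine ⟨(i + k) % n, Nat.mod_lt _ hn, ?_⟩
      funext j
      rw [key j, hpowmod, pow_add, mul_assoc]
    · rintro ⟨i, hi, rfl⟩
      refine ⟨(i + n * k - k) % n, Nat.mod_lt _ hn, ?_⟩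
      funext j
      rw [key j, hpowmod, ← mul_assoc, ← pow_add]
      congr 1
      have h2 : i + n * k - k + k = i + n * k := by
        have : k ≤ n * k := Nat.le_mul_of_pos_left k hn
        omega
      rw [h2, pow_add, pow_mul, hαn, one_pow, mul_one]
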